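/- Suppose L(ρ∞) = 0 for the Lindbladian L, and A satisfies [H,A] = λA with λ real, and [L_k,A] = [L_k†,A] = 0 for all k. Then L(A ρ∞ A†) = 0, i.e., A ρ∞ A† is also a stationary state of the Lindbladian. -/
import Mathlib


open Matrix

/-- The Lindbladian `L(ρ) = -i[H,ρ] + Σ_k (2 L_k ρ L_kᴴ - L_kᴴL_k ρ - ρ L_kᴴL_k)`. -/
noncomputable def lindbladian {N K : ℕ} (H : Matrix (Fin N) (Fin N) ℂ)
    (L : Fin K → Matrix (Fin N) (Fin N) ℂ) (ρ : Matrix (Fin N) (Fin N) ℂ) :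
    Matrix (Fin N) (Fin N) ℂ :=
  (-Complex.I) • (H * ρ - ρ * H)
    + ∑ k, ((2 : ℂ) • (L k * ρ * (L k)ᴴ) - ((L k)ᴴ * L k * ρ + ρ * ((L k)ᴴ * L k)))

/-- If `L(ρ∞) = 0`, `[H,A] = λ • A` with `λ` real, and `A` commutes with every
`L_k` and `L_kᴴ`, then `A ρ∞ Aᴴ` is also a stationary state: `L(A ρ∞ Aᴴ) = 0`. -/
theorem stationary_of_conjugated {N K : ℕ}
    (H A : Matrix (Fin N) (Fin N) ℂ) (L : Fin K → Matrix (Fin N) (Fin N) ℂ)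
    (ρinf : Matrix (Fin N) (Fin N) ℂ) (lam : ℝ)
    (hH : H.IsHermitian)
    (hstat : lindbladian H L ρinf = 0)
    (hComm : H * A - A * H = (lam : ℂ) • A)
    (hL : ∀ k, L k * A = A * L k)
    (hLdag : ∀ k, (L k)ᴴ * A = A * (L k)ᴴ) :
    lindbladian H L (A * ρinf * Aᴴ) = 0 := by
  have hHA : H * A = A * H + (lam : ℂ) • A := by
    rw [← hComm]; abel
  have hAH : Aᴴ * H = H * Aᴴ + (lam : ℂ) • Aᴴ := by
    have := congrArg conjTranspose hComm
    simp only [conjTranspose_sub, conjTranspose_mul, conjTranspose_smul, hH.eq,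
      Complex.star_def, Complex.conj_ofReal] at this
    rw [← this]; abel
  have hL' : ∀ k, Aᴴ * (L k)ᴴ = (L k)ᴴ * Aᴴ := by
    intro k
    have := congrArg conjTranspose (hL k)
    simpa [conjTranspose_mul] using this
  have hLdag' : ∀ k, Aᴴ * L k = L k * Aᴴ := by
    intro k
    have := congrArg conjTranspose (hLdag k)
    simpa [conjTranspose_mul] using this
  have key : lindbladian H L (A * ρinf * Aᴴ) = A * lindbladian H L ρinf * Aᴴ := by
    unfold lindbladian
    have hHam : H * (A * ρinf * Aᴴ) - (A * ρinf * Aᴴ) * H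
        = A * (H * ρinf - ρinf * H) * Aᴴ := by
      have e1 : H * (A * ρinf * Aᴴ) = (H * A) * ρinf * Aᴴ := by
        noncomm_ring
      have e2 : (A * ρinf * Aᴴ) * H = A * ρinf * (Aᴴ * H) := by
        noncomm_ring
      rw [e1, e2, hHA, hAH]
      noncomm_ring
    have hSum : ∀ k : Fin K,
        ((2 : ℂ) • (L k * (A * ρinf * Aᴴ) * (L k)ᴴ)
          - ((L k)ᴴ * L k * (A * ρinf * Aᴴ) + (A * ρinf * Aᴴ) * ((L k)ᴴ * L k)))
        = A * ((2 : ℂ) • (L k * ρinf * (L k)ᴴ)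
          - ((L k)ᴴ * L k * ρinf + ρinf * ((L k)ᴴ * L k))) * Aᴴ := by
      intro k
      have e1 : L k * (A * ρinf * Aᴴ) * (L k)ᴴ = A * (L k * ρinf * (L k)ᴴ) * Aᴴ := by
        calc L k * (A * ρinf * Aᴴ) * (L k)ᴴ
            = (L k * A) * ρinf * (Aᴴ * (L k)ᴴ) := by noncomm_ring
          _ = (A * L k) * ρinf * ((L k)ᴴ * Aᴴ) := by rw [hL k, hL' k]
          _ = A * (L k * ρinf * (L k)ᴴ) * Aᴴ := by noncomm_ring
      have e2 : (L k)ᴴ * L k * (A * ρinf * Aᴴ) = A * ((L k)ᴴ * L k * ρinf) * Aᴴ := by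
        calc (L k)ᴴ * L k * (A * ρinf * Aᴴ)
            = (L k)ᴴ * (L k * A) * ρinf * Aᴴ := by noncomm_ring
          _ = ((L k)ᴴ * A) * L k * ρinf * Aᴴ := by rw [hL k]; noncomm_ring
          _ = (A * (L k)ᴴ) * L k * ρinf * Aᴴ := by rw [hLdag k]
          _ = A * ((L k)ᴴ * L k * ρinf) * Aᴴ := by noncomm_ring
      have e3 : (A * ρinf * Aᴴ) * ((L k)ᴴ * L k) = A * (ρinf * ((L k)ᴴ * L k)) * Aᴴ := by
        calc (A * ρinf * Aᴴ) * ((L k)ᴴ * L k)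
            = A * ρinf * ((Aᴴ * (L k)ᴴ) * L k) := by noncomm_ring
          _ = A * ρinf * ((L k)ᴴ * (Aᴴ * L k)) := by rw [hL' k]; noncomm_ring
          _ = A * ρinf * ((L k)ᴴ * (L k * Aᴴ)) := by rw [hLdag' k]
          _ = A * (ρinf * ((L k)ᴴ * L k)) * Aᴴ := by noncomm_ring
      rw [e1, e2, e3]
      rw [Matrix.mul_sub, Matrix.sub_mul, Matrix.mul_add, Matrix.add_mul,
        mul_smul_comm, smul_mul_assoc]
    rw [Finset.sum_congr rfl (fun k _ => hSum k)]
    rw [hHam, Matrix.mul_add, Matrix.add_mul, ← Finset.sum_mul, ← Finset.mul_sum,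
      mul_smul_comm, smul_mul_assoc]
  rw [key, hstat, Matrix.mul_zero, Matrix.zero_mul]
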